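/- (Linesearch well-definedness) Let γ ∈ (0, min{1/L_f, γ_g}), σ ∈ (0, γ(1−γL_f)/2), x ∈ ℝⁿ non-critical, x̄ ∈ T_γ(x) and d ∈ ℝⁿ. Then there exists τ̄ > 0 such that φ_γ(x̄ + τ d) ≤ φ_γ(x) − σ‖(x − x̄)/γ‖² for all τ ∈ [0, τ̄]. -/

import Mathlib

open Set Filter Topology

/-- The majorizing model `ℓ_γ(z; x) = f(x) + ⟨∇f(x), z−x⟩ + ‖z−x‖²/(2γ) + g(z)`. -/
noncomputable def linQ {n : ℕ} (f : EuclideanSpace ℝ (Fin n) → ℝ)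
    (f' : EuclideanSpace ℝ (Fin n) → EuclideanSpace ℝ (Fin n))
    (g : EuclideanSpace ℝ (Fin n) → EReal) (γ : ℝ)
    (x z : EuclideanSpace ℝ (Fin n)) : EReal :=
  ((f x + (inner ℝ (f' x) (z - x) : ℝ) + ‖z - x‖ ^ 2 / (2 * γ) : ℝ) : EReal) + g z

/-- The forward-backward operator `T_γ(x)`: the set of minimizers of `z ↦ ℓ_γ(z; x)`. -/
noncomputable def Tset {n : ℕ} (f : EuclideanSpace ℝ (Fin n) → ℝ)
    (f' : EuclideanSpace ℝ (Fin n) → EuclideanSpace ℝ (Fin n))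
    (g : EuclideanSpace ℝ (Fin n) → EReal) (γ : ℝ)
    (x : EuclideanSpace ℝ (Fin n)) : Set (EuclideanSpace ℝ (Fin n)) :=
  {z | ∀ w, linQ f f' g γ x z ≤ linQ f f' g γ x w}

/-- The forward-backward envelope `φ_γ(x) = inf_z ℓ_γ(z; x)`. -/
noncomputable def fbe {n : ℕ} (f : EuclideanSpace ℝ (Fin n) → ℝ)
    (f' : EuclideanSpace ℝ (Fin n) → EuclideanSpace ℝ (Fin n))
    (g : EuclideanSpace ℝ (Fin n) → EReal) (γ : ℝ)
    (x : EuclideanSpace ℝ (Fin n)) : EReal :=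
  ⨅ z, linQ f f' g γ x z

/-- `g + ‖·‖²/(2γ)` is bounded below by a real constant. -/
def ProxBddBelow {n : ℕ} (g : EuclideanSpace ℝ (Fin n) → EReal) (γ : ℝ) : Prop :=
  ∃ c : ℝ, ∀ z, (c : EReal) ≤ g z + ((‖z‖ ^ 2 / (2 * γ) : ℝ) : EReal)

/-- `g` is proper: not identically `⊤`, and never `⊥`. -/
def ProperFn {n : ℕ} (g : EuclideanSpace ℝ (Fin n) → EReal) : Prop :=
  (∃ x, g x ≠ ⊤) ∧ ∀ x, g x ≠ ⊥

/-- The criticality threshold `Γ(x) = sup({γ > 0 : x ∈ T_γ(x)} ∪ {0})`. -/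
noncomputable def critThresh {n : ℕ} (f : EuclideanSpace ℝ (Fin n) → ℝ)
    (f' : EuclideanSpace ℝ (Fin n) → EuclideanSpace ℝ (Fin n))
    (g : EuclideanSpace ℝ (Fin n) → EReal)
    (x : EuclideanSpace ℝ (Fin n)) : ℝ :=
  sSup ({γ : ℝ | 0 < γ ∧ x ∈ Tset f f' g γ x} ∪ {0})

lemma descent_lemma {n : ℕ} (f : EuclideanSpace ℝ (Fin n) → ℝ)
    (f' : EuclideanSpace ℝ (Fin n) → EuclideanSpace ℝ (Fin n))
    (hgrad : ∀ x, HasGradientAt f (f' x) x)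
    (Lf : ℝ) (hLf : 0 ≤ Lf) (hlip : LipschitzWith (Real.toNNReal Lf) f')
    (x y : EuclideanSpace ℝ (Fin n)) :
    f y ≤ f x + inner ℝ (f' x) (y - x) + Lf / 2 * ‖y - x‖ ^ 2 := by
  set u := y - x with hu
  have hfc' : Continuous f' := hlip.continuous
  have hpath : ∀ t : ℝ, HasDerivAt (fun s : ℝ => x + s • u) u t := by
    intro t
    simpa using ((hasDerivAt_id t).smul_const u).const_add x
  have hφ : ∀ t : ℝ, HasDerivAt (fun s : ℝ => f (x + s • u))
      (inner ℝ (f' (x + t • u)) u : ℝ) t := by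
    intro t
    have h1 := ((hgrad (x + t • u)).hasFDerivAt).comp_hasDerivAt t (hpath t)
    simp only [InnerProductSpace.toDual_apply_apply] at h1; exact h1
  have hcont : Continuous fun t : ℝ => (inner ℝ (f' (x + t • u)) u : ℝ) := by
    exact (Continuous.inner (hfc'.comp (continuous_const.add (continuous_id.smul continuous_const))) continuous_const)
  have hFTC : f (x + (1:ℝ) • u) - f (x + (0:ℝ) • u)
      = ∫ t in (0:ℝ)..1, (inner ℝ (f' (x + t • u)) u : ℝ) := by
    refine (intervalIntegral.integral_eq_sub_of_hasDerivAt (fun t _ => hφ t) ?_).symm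
    exact hcont.intervalIntegrable 0 1
  have hbound : ∀ t ∈ Set.Icc (0:ℝ) 1,
      (inner ℝ (f' (x + t • u)) u : ℝ) ≤ inner ℝ (f' x) u + Lf * t * ‖u‖ ^ 2 := by
    intro t ht
    have h1 : (inner ℝ (f' (x + t • u)) u : ℝ) - inner ℝ (f' x) u
        = inner ℝ (f' (x + t • u) - f' x) u := by
      rw [inner_sub_left]
    have h2 : ‖f' (x + t • u) - f' x‖ ≤ Lf * (t * ‖u‖) := by
      have hd := hlip.dist_le_mul (x + t • u) x
      rw [dist_eq_norm, dist_eq_norm, add_sub_cancel_left, Real.coe_toNNReal _ hLf,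
        norm_smul, Real.norm_eq_abs, abs_of_nonneg ht.1] at hd
      linarith [hd]
    have h4 : (inner ℝ (f' (x + t • u) - f' x) u : ℝ) ≤ Lf * (t * ‖u‖) * ‖u‖ := by
      calc (inner ℝ (f' (x + t • u) - f' x) u : ℝ) ≤ ‖f' (x + t • u) - f' x‖ * ‖u‖ :=
            real_inner_le_norm _ _
        _ ≤ Lf * (t * ‖u‖) * ‖u‖ := by
            have : (0:ℝ) ≤ ‖u‖ := norm_nonneg u
            gcongr
    nlinarith [h1, h4]
  have hint : (∫ t in (0:ℝ)..1, (inner ℝ (f' (x + t • u)) u : ℝ))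
      ≤ ∫ t in (0:ℝ)..1, (inner ℝ (f' x) u + Lf * t * ‖u‖ ^ 2 : ℝ) := by
    apply intervalIntegral.integral_mono_on (by norm_num)
    · exact hcont.intervalIntegrable 0 1
    · exact (by fun_prop : Continuous fun t : ℝ => (inner ℝ (f' x) u + Lf * t * ‖u‖ ^ 2 : ℝ)).intervalIntegrable 0 1
    · exact hbound
  have hval : (∫ t in (0:ℝ)..1, (inner ℝ (f' x) u + Lf * t * ‖u‖ ^ 2 : ℝ))
      = inner ℝ (f' x) u + Lf / 2 * ‖u‖ ^ 2 := by
    rw [intervalIntegral.integral_add (intervalIntegrable_const)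
      ((by fun_prop : Continuous fun t : ℝ => Lf * t * ‖u‖ ^ 2).intervalIntegrable 0 1)]
    simp only [intervalIntegral.integral_const, smul_eq_mul]
    have : (∫ t in (0:ℝ)..1, Lf * t * ‖u‖ ^ 2) = Lf / 2 * ‖u‖ ^ 2 := by
      have : (fun t : ℝ => Lf * t * ‖u‖ ^ 2) = fun t : ℝ => (Lf * ‖u‖ ^ 2) * t := by
        ext t; ring
      rw [this, intervalIntegral.integral_const_mul, integral_id]
      ring
    rw [this]; ring
  have hxy : x + (1:ℝ) • u = y := by simp [hu]
  have hx0 : x + (0:ℝ) • u = x := by simp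
  rw [hxy, hx0] at hFTC
  linarith [hFTC, hint, hval.le, hval.ge]

theorem stmt17 {n : ℕ} (f : EuclideanSpace ℝ (Fin n) → ℝ)
    (f' : EuclideanSpace ℝ (Fin n) → EuclideanSpace ℝ (Fin n))
    (hgrad : ∀ x, HasGradientAt f (f' x) x)
    (Lf : ℝ) (hLf : 0 < Lf) (hlip : LipschitzWith (Real.toNNReal Lf) f')
    (g : EuclideanSpace ℝ (Fin n) → EReal)
    (hproper : ProperFn g) (hlsc : LowerSemicontinuous g)
    (γg : ℝ) (hpb : ∀ γ' ∈ Set.Ioo (0 : ℝ) γg, ProxBddBelow g γ')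
    (γ : ℝ) (hγ : γ ∈ Set.Ioo (0 : ℝ) (min (1 / Lf) γg))
    (σ : ℝ) (hσ : σ ∈ Set.Ioo (0 : ℝ) (γ * (1 - γ * Lf) / 2))
    (x xb : EuclideanSpace ℝ (Fin n)) (hxb : xb ∈ Tset f f' g γ x)
    (hnoncrit : xb ≠ x) (d : EuclideanSpace ℝ (Fin n)) :
    ∃ τb : ℝ, 0 < τb ∧ ∀ τ ∈ Set.Icc (0 : ℝ) τb,
      fbe f f' g γ (xb + τ • d) ≤
        fbe f f' g γ x - ((σ * ‖γ⁻¹ • (x - xb)‖ ^ 2 : ℝ) : EReal) := by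
  obtain ⟨⟨z₀, hz₀⟩, hbot⟩ := hproper
  have hγ0 : 0 < γ := hγ.1
  have hγL : γ * Lf < 1 := by
    have := hγ.2
    have h1 : γ < 1 / Lf := lt_of_lt_of_le this (min_le_left _ _)
    calc γ * Lf < (1 / Lf) * Lf := by gcongr
      _ = 1 := by field_simp
  -- fbe x = linQ x xb
  have hfbex : fbe f f' g γ x = linQ f f' g γ x xb :=
    le_antisymm (iInf_le _ xb) (le_iInf hxb)
  -- g xb ≠ ⊤
  have hzr : linQ f f' g γ x z₀ ≠ ⊤ := by
    have hz : g z₀ = (((g z₀).toReal : ℝ) : EReal) := (EReal.coe_toReal hz₀ (hbot z₀)).symm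
    unfold linQ
    rw [hz, ← EReal.coe_add]
    exact EReal.coe_ne_top _
  have hlt : linQ f f' g γ x xb ≠ ⊤ := by
    intro htop
    exact hzr (top_le_iff.mp (htop ▸ hxb z₀))
  have hgxbt : g xb ≠ ⊤ := by
    intro h
    apply hlt
    unfold linQ
    rw [h]
    exact EReal.add_top_of_ne_bot (EReal.coe_ne_bot _)
  set gxb : ℝ := (g xb).toReal with hgxb
  have hgxbe : g xb = (gxb : EReal) := (EReal.coe_toReal hgxbt (hbot xb)).symm
  set A : ℝ := f x + (inner ℝ (f' x) (xb - x) : ℝ) + ‖xb - x‖ ^ 2 / (2 * γ) with hA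
  have hfbexr : fbe f f' g γ x = ((A + gxb : ℝ) : EReal) := by
    rw [hfbex]; unfold linQ; rw [hgxbe, ← EReal.coe_add]
  set N : ℝ := ‖γ⁻¹ • (x - xb)‖ ^ 2 with hN
  have hNval : N = γ⁻¹ ^ 2 * ‖xb - x‖ ^ 2 := by
    rw [hN, norm_smul, Real.norm_eq_abs, abs_of_nonneg (by positivity), norm_sub_rev]
    ring
  have hnorm_pos : 0 < ‖xb - x‖ ^ 2 := by
    have h0 : xb - x ≠ 0 := sub_ne_zero.mpr hnoncrit
    exact pow_pos (norm_pos_iff.mpr h0) 2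
  -- key strict real inequality
  have hdesc := descent_lemma f f' hgrad Lf hLf.le hlip x xb
  have hkey : f xb + gxb < A + gxb - σ * N := by
    have hcoeff : σ * γ⁻¹ ^ 2 < 1 / (2 * γ) - Lf / 2 := by
      rw [div_sub_div _ _ (by positivity : (2*γ:ℝ) ≠ 0) (by norm_num : (2:ℝ) ≠ 0)]
      have h2 : σ < γ * (1 - γ * Lf) / 2 := hσ.2
      rw [lt_div_iff₀ (by positivity : (0:ℝ) < 2 * γ * 2)]
      have : σ * γ⁻¹ ^ 2 * (2 * γ * 2) = σ * γ⁻¹ * 4 := by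
        field_simp; ring
      rw [this]
      have hgoal : (1 * 2 - 2 * γ * Lf : ℝ) = 2 * (1 - γ * Lf) := by ring
      rw [hgoal]
      rw [lt_div_iff₀ (by norm_num : (0:ℝ) < 2)] at h2
      calc σ * γ⁻¹ * 4 = (σ * 4) * γ⁻¹ := by ring
        _ < (γ * (1 - γ * Lf) * 2) * γ⁻¹ := by
            apply mul_lt_mul_of_pos_right _ (by positivity)
            nlinarith
        _ = 2 * (1 - γ * Lf) := by field_simp
    have hstrict : σ * N < (1 / (2 * γ) - Lf / 2) * ‖xb - x‖ ^ 2 := by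
      rw [hNval, ← mul_assoc]
      exact mul_lt_mul_of_pos_right hcoeff hnorm_pos
    have : f xb ≤ A - (1 / (2 * γ) - Lf / 2) * ‖xb - x‖ ^ 2 := by
      rw [hA]
      have : ‖xb - x‖ ^ 2 / (2 * γ) = 1 / (2 * γ) * ‖xb - x‖ ^ 2 := by ring
      nlinarith [hdesc]
    clear_value A N gxb
    linarith
  set K : ℝ := A + gxb - σ * N with hK
  -- continuity
  have hfc : Continuous f :=
    Differentiable.continuous fun y => (hgrad y).hasFDerivAt.differentiableAt
  have hfc' : Continuous f' := hlip.continuous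
  set h : ℝ → ℝ := fun τ =>
    f (xb + τ • d) + (inner ℝ (f' (xb + τ • d)) (xb - (xb + τ • d)) : ℝ)
      + ‖xb - (xb + τ • d)‖ ^ 2 / (2 * γ) + gxb with hh
  have hhc : Continuous h := by
    have hp : Continuous fun τ : ℝ => xb + τ • d :=
      continuous_const.add (continuous_id.smul continuous_const)
    apply Continuous.add
    apply Continuous.add
    apply Continuous.add
    · exact hfc.comp hp
    · exact Continuous.inner (hfc'.comp hp) (continuous_const.sub hp)
    · exact Continuous.div_const ((continuous_const.sub hp).norm.pow 2) _
    · exact continuous_const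
  have hh0 : h 0 = f xb + gxb := by
    simp [hh]
  have hh0lt : h 0 < K := by rw [hh0]; exact hkey
  have hev : ∀ᶠ τ in 𝓝 (0:ℝ), h τ < K :=
    (hhc.continuousAt).eventually_lt continuousAt_const hh0lt
  obtain ⟨τb, hτb, hball⟩ := Metric.eventually_nhds_iff.mp hev
  refine ⟨τb / 2, by positivity, fun τ hτ => ?_⟩
  have hτlt : h τ < K := by
    apply hball
    rw [Real.dist_eq, sub_zero, abs_of_nonneg hτ.1]
    linarith [hτ.2]
  have hlin : linQ f f' g γ (xb + τ • d) xb = ((h τ : ℝ) : EReal) := by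
    unfold linQ
    rw [hgxbe, ← EReal.coe_add, hh]
  calc fbe f f' g γ (xb + τ • d) ≤ linQ f f' g γ (xb + τ • d) xb := iInf_le _ xb
    _ = ((h τ : ℝ) : EReal) := hlin
    _ ≤ ((K : ℝ) : EReal) := by exact_mod_cast hτlt.le
    _ = fbe f f' g γ x - ((σ * N : ℝ) : EReal) := by
        rw [hfbexr, ← EReal.coe_sub, hK]
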